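/- For every nonempty word w over {L,R} with b = ℓ_b(w) blocks, (2b/3) + 8/9 + (−1)^b/(9·2^b) ≤ D²[P_w] < 2b. -/

import Mathlib

/-- The probability mass functions `P t` on ℤ, defined by
`P 1 = δ₀`, `P (2t) = P t`, `P (2t+1) d = ½ P (t+1) (d+1) + ½ P t (d-1)`. -/
noncomputable def P : ℕ → ℤ → ℝ
  | 0, _ => 0
  | 1, d => if d = 0 then 1 else 0
  | (n+2), d =>
      if h : (n + 2) % 2 = 0 then P ((n+2)/2) d
      else (1/2) * P ((n+2)/2 + 1) (d+1) + (1/2) * P ((n+2)/2) (d-1)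
  decreasing_by all_goals omega

/-- Letters of the alphabet. -/
inductive LR | L | R
deriving DecidableEq

/-- One step of the identification of words with odd integers: `L : t ↦ 2t-1`, `R : t ↦ 2t+1`. -/
def LRstep (t : ℕ) : LR → ℕ
  | LR.L => 2 * t - 1
  | LR.R => 2 * t + 1

/-- The odd integer associated to a word over `{L,R}`, starting from 3. -/
def hword (w : List LR) : ℕ := w.foldl LRstep 3

/-- The variance `D²[p] = ∑ k² p(k)` of a mean-zero probability mass function on ℤ. -/
noncomputable def var (p : ℤ → ℝ) : ℝ := ∑' k : ℤ, (k : ℝ) ^ 2 * p k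

/-- The number of blocks (maximal runs of a single letter) of a word. -/
def blocks : List LR → ℕ
  | [] => 0
  | [_] => 1
  | a :: b :: rest => (if a = b then 0 else 1) + blocks (b :: rest)


lemma P_one : P 1 = fun d => if d = 0 then (1:ℝ) else 0 := by
  funext d; rw [P]

lemma var_def (p : ℤ → ℝ) : var p = ∑' k : ℤ, (k : ℝ) ^ 2 * p k := rfl

lemma P_even (t : ℕ) (ht : 1 ≤ t) : P (2 * t) = P t := by
  funext d
  rw [show 2 * t = (2 * t - 2) + 2 by omega, P, dif_pos (by omega),
    show (2 * t - 2 + 2) / 2 = t by omega]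

lemma P_odd (t : ℕ) (ht : 1 ≤ t) :
    P (2 * t + 1) = fun d => (1/2) * P (t+1) (d+1) + (1/2) * P t (d-1) := by
  funext d
  rw [show 2 * t + 1 = (2 * t - 1) + 2 by omega, P, dif_neg (by omega),
    show (2 * t - 1 + 2) / 2 = t by omega]

lemma P_fin (t : ℕ) : (Function.support (P t)).Finite := by
  induction t using Nat.strong_induction_on with
  | _ t ih =>
    match t with
    | 0 => convert Set.finite_empty; ext d; simp [P]
    | 1 =>
      apply (Set.finite_singleton (0:ℤ)).subset
      intro d hd
      simp [Function.mem_support, P] at hd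
      simp [hd]
    | (n+2) =>
      by_cases h : (n+2) % 2 = 0
      · have he : P (n+2) = P ((n+2)/2) := by
          funext d; rw [P, dif_pos h]
        rw [he]; exact ih _ (by omega)
      · have hv := (ih ((n+2)/2 + 1) (by omega)).preimage
          (f := fun d : ℤ => d + 1) (Function.Injective.injOn (fun a b hab => by simpa using hab))
        have hu := (ih ((n+2)/2) (by omega)).preimage
          (f := fun d : ℤ => d - 1) (Function.Injective.injOn (fun a b hab => by simpa using hab))
        apply (hv.union hu).subset
        intro d hd
        simp only [Function.mem_support, P, dif_neg h] at hd
        by_contra hmem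
        simp only [Set.mem_union, Set.mem_preimage, Function.mem_support, not_or, not_not] at hmem
        rw [hmem.1, hmem.2] at hd
        simp at hd

lemma summable_P (t : ℕ) (g : ℤ → ℝ) : Summable (fun k => g k * P t k) := by
  apply summable_of_finite_support ((P_fin t).subset ?_)
  intro k hk
  simp only [Function.mem_support] at hk ⊢
  exact fun h => hk (by rw [h, mul_zero])

lemma summable_shift (t : ℕ) (g : ℤ → ℝ) (c : ℤ) :
    Summable (fun d : ℤ => g d * P t (d + c)) := by
  have : (fun d : ℤ => g d * P t (d + c)) =
      (fun k => g (k - c) * P t k) ∘ (fun d : ℤ => d + c) := by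
    funext d; simp
  rw [this]
  exact (summable_P t _).comp_injective (add_left_injective c)

lemma tsum_shift (t : ℕ) (g : ℤ → ℝ) (c : ℤ) :
    ∑' d : ℤ, g d * P t (d + c) = ∑' k : ℤ, g (k - c) * P t k := by
  have h := (Equiv.addRight c).tsum_eq (fun k => g (k - c) * P t k)
  simp only [Equiv.coe_addRight, add_sub_cancel_right] at h
  exact h

lemma tsum_P_odd (s : ℕ) (hs : 1 ≤ s) (g : ℤ → ℝ) :
    ∑' d : ℤ, g d * P (2*s+1) d
      = 1/2 * ∑' k : ℤ, g (k - 1) * P (s+1) k + 1/2 * ∑' k : ℤ, g (k + 1) * P s k := by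
  calc ∑' d : ℤ, g d * P (2*s+1) d
      = ∑' d : ℤ, (1/2 * (g d * P (s+1) (d+1)) + 1/2 * (g d * P s (d + (-1)))) := by
        refine tsum_congr fun d => ?_
        rw [P_odd s hs]
        simp only [sub_eq_add_neg]
        ring
    _ = (∑' d : ℤ, 1/2 * (g d * P (s+1) (d+1))) + ∑' d : ℤ, 1/2 * (g d * P s (d + (-1))) :=
        Summable.tsum_add ((summable_shift (s+1) g 1).mul_left _) ((summable_shift s g (-1)).mul_left _)
    _ = 1/2 * (∑' d : ℤ, g d * P (s+1) (d+1)) + 1/2 * (∑' d : ℤ, g d * P s (d + (-1))) := by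
        rw [tsum_mul_left, tsum_mul_left]
    _ = _ := by
        rw [tsum_shift, tsum_shift]
        simp only [sub_neg_eq_add]

lemma P_m0_m1 (t : ℕ) (ht : 1 ≤ t) :
    (∑' k : ℤ, P t k) = 1 ∧ (∑' k : ℤ, (k : ℝ) * P t k) = 0 := by
  induction t using Nat.strong_induction_on with
  | _ t ih =>
    rcases Nat.lt_or_ge t 2 with h2 | h2
    · have : t = 1 := by omega
      subst this
      constructor
      · rw [tsum_congr (fun k : ℤ => by rw [P_one])]
        exact tsum_ite_eq (0:ℤ) (fun _ => (1:ℝ))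
      · rw [tsum_congr (g := fun _ : ℤ => (0:ℝ)) (fun k => ?_), tsum_zero]
        rw [P_one]
        by_cases h : k = 0 <;> simp [h]
    rcases Nat.even_or_odd t with ⟨s, hs⟩ | ⟨s, hs⟩
    · have hs1 : 1 ≤ s := by omega
      have hre : t = 2 * s := by omega
      subst hre
      rw [P_even s hs1]
      exact ih s (by omega) hs1
    · have hs1 : 1 ≤ s := by omega
      subst hs
      obtain ⟨h0v, h1v⟩ := ih (s+1) (by omega) (by omega)
      obtain ⟨h0u, h1u⟩ := ih s (by omega) hs1
      constructor
      · rw [tsum_congr (g := fun d : ℤ => (fun _ : ℤ => (1:ℝ)) d * P (2*s+1) d)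
          (fun d => (one_mul _).symm), tsum_P_odd s hs1]
        simp only [one_mul]
        rw [h0v, h0u]; norm_num
      · rw [tsum_congr (g := fun d : ℤ => (fun k : ℤ => (k:ℝ)) d * P (2*s+1) d)
          (fun d => rfl), tsum_P_odd s hs1]
        have e1 : ∑' k : ℤ, ((k - 1 : ℤ) : ℝ) * P (s+1) k
            = (∑' k : ℤ, (k:ℝ) * P (s+1) k) - ∑' k : ℤ, P (s+1) k := by
          rw [← Summable.tsum_sub (summable_P (s+1) _) (by simpa using summable_P (s+1) (fun _ => (1:ℝ)))]
          refine tsum_congr fun k => ?_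
          push_cast; ring
        have e2 : ∑' k : ℤ, ((k + 1 : ℤ) : ℝ) * P s k
            = (∑' k : ℤ, (k:ℝ) * P s k) + ∑' k : ℤ, P s k := by
          rw [← Summable.tsum_add (summable_P s _) (by simpa using summable_P s (fun _ => (1:ℝ)))]
          refine tsum_congr fun k => ?_
          push_cast; ring
        rw [e1, e2, h0v, h1v, h0u, h1u]; norm_num

lemma var_one : var (P 1) = 0 := by
  rw [var_def, tsum_congr (g := fun _ : ℤ => (0:ℝ)) (fun k => ?_), tsum_zero]
  rw [P_one]
  by_cases h : k = 0 <;> simp [h]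

lemma var_even (t : ℕ) (ht : 1 ≤ t) : var (P (2 * t)) = var (P t) := by
  rw [P_even t ht]

lemma sq_moment (v : ℕ) (hv : 1 ≤ v) (c : ℤ) :
    ∑' k : ℤ, ((k + c : ℤ) : ℝ)^2 * P v k = var (P v) + (c:ℝ)^2 := by
  obtain ⟨h0, h1⟩ := P_m0_m1 v hv
  have e : ∀ k : ℤ, ((k + c : ℤ) : ℝ)^2 * P v k
      = (k:ℝ)^2 * P v k + ((2*(c:ℝ)) * ((k:ℝ) * P v k) + ((c:ℝ)^2) * P v k) := by
    intro k; push_cast; ring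
  rw [tsum_congr e,
    Summable.tsum_add (summable_P v (fun k => (k:ℝ)^2))
      (((summable_P v (fun k => (k:ℝ))).mul_left _).add
        (by simpa using summable_P v (fun _ => (c:ℝ)^2))),
    Summable.tsum_add ((summable_P v (fun k => (k:ℝ))).mul_left _)
      (by simpa using summable_P v (fun _ => (c:ℝ)^2)),
    tsum_mul_left, tsum_mul_left, h0, h1, var_def]
  ring

lemma var_odd (s : ℕ) (hs : 1 ≤ s) :
    var (P (2*s+1)) = (var (P (s+1)) + var (P s)) / 2 + 1 := by
  rw [var_def, tsum_congr (g := fun d : ℤ => (fun k : ℤ => ((k:ℝ))^2) d * P (2*s+1) d)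
    (fun d => rfl), tsum_P_odd s hs (fun k => (k:ℝ)^2)]
  have e1 : ∑' k : ℤ, ((k - 1 : ℤ):ℝ)^2 * P (s+1) k = var (P (s+1)) + 1 := by
    have h := sq_moment (s+1) (by omega) (-1)
    norm_num at h
    rw [← h]
    refine tsum_congr fun k => ?_
    push_cast; ring
  have e2 : ∑' k : ℤ, ((k + 1 : ℤ):ℝ)^2 * P s k = var (P s) + 1 := by
    have h := sq_moment s hs 1
    norm_num at h
    rw [← h]
    refine tsum_congr fun k => ?_
    push_cast; ring
  rw [e1, e2]
  ring

noncomputable def alpha (b : ℕ) : ℝ := 2*b/3 + 2/9 - 2/9 * ((-1:ℝ)/2)^b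

lemma alpha_zero : alpha 0 = 0 := by norm_num [alpha]
lemma alpha_one : alpha 1 = 1 := by norm_num [alpha]

lemma alpha_rec (b : ℕ) : alpha (b+2) = (alpha (b+1) + alpha b)/2 + 1 := by
  simp only [alpha, pow_succ]
  push_cast
  ring

lemma alpha_mono (b : ℕ) : alpha b ≤ alpha (b+1) := by
  have h : |((-1:ℝ)/2)^b| ≤ 1 := by
    rw [abs_pow]
    apply pow_le_one₀ (abs_nonneg _)
    rw [abs_div]; norm_num
  have h2 := abs_le.mp h
  simp only [alpha, pow_succ]
  push_cast
  nlinarith [h2.1, h2.2]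

lemma alpha_succ_eq (b : ℕ) :
    alpha (b+1) = 2*(b:ℝ)/3 + 8/9 + (-1:ℝ)^b/(9*2^b) := by
  have h2 : (2:ℝ)^b ≠ 0 := by positivity
  simp only [alpha, pow_succ, div_pow]
  push_cast
  field_simp
  ring

lemma hword_facts (w : List LR) : 3 ≤ hword w ∧ hword w % 2 = 1 := by
  suffices h : ∀ (w : List LR) (t : ℕ), 3 ≤ t → t % 2 = 1 →
      3 ≤ List.foldl LRstep t w ∧ List.foldl LRstep t w % 2 = 1 by
    exact h w 3 (by norm_num) (by norm_num)
  intro w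
  induction w with
  | nil => intro t h1 h2; simpa using ⟨h1, h2⟩
  | cons a l ih =>
    intro t h1 h2
    rw [List.foldl_cons]
    apply ih
    · cases a <;> simp only [LRstep] <;> omega
    · cases a <;> simp only [LRstep] <;> omega

lemma hword_append (w : List LR) (c : LR) : hword (w ++ [c]) = LRstep (hword w) c := by
  simp [hword, List.foldl_append]

lemma blocks_pos (w : List LR) (h : w ≠ []) : 1 ≤ blocks w := by
  induction w with
  | nil => simp at h
  | cons a l ih =>
    cases l with
    | nil => simp [blocks]
    | cons b rest =>
      have := ih (by simp)
      simp only [blocks] at *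
      omega

lemma blocks_concat (w : List LR) (h : w ≠ []) (c : LR) :
    blocks (w ++ [c]) = blocks w + (if w.getLast? = some c then 0 else 1) := by
  induction w with
  | nil => simp at h
  | cons a l ih =>
    cases l with
    | nil => by_cases hac : a = c <;> simp [blocks, hac]
    | cons b rest =>
      have ihr := ih (by simp)
      simp only [List.cons_append] at *
      rw [List.getLast?_cons_cons]
      simp only [blocks] at *
      omega

noncomputable def Yv (t : ℕ) : ℝ := var (P ((t+1)/2))
noncomputable def Xv (t : ℕ) : ℝ := var (P ((t-1)/2))

lemma step_bounds (A S : ℝ) (b : ℕ) (hb : 1 ≤ b)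
    (h1 : S < A) (h2 : A < S + 2) (h3 : S ≤ 2*(b:ℝ) - 2)
    (h4 : alpha (b-1) ≤ S) (h5 : alpha b ≤ A) :
    (S < (A+S)/2+1 ∧ (A+S)/2+1 < S + 2 ∧ S ≤ 2*(b:ℝ) - 2 ∧
      alpha (b-1) ≤ S ∧ alpha b ≤ (A+S)/2+1) ∧
    (A < (A+S)/2+1 ∧ (A+S)/2+1 < A + 2 ∧ A ≤ 2*((b+1:ℕ):ℝ) - 2 ∧
      alpha ((b+1)-1) ≤ A ∧ alpha (b+1) ≤ (A+S)/2+1) := by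
  obtain ⟨m, rfl⟩ : ∃ m, b = m + 1 := ⟨b - 1, by omega⟩
  have hrec : alpha (m+2) = (alpha (m+1) + alpha m)/2 + 1 := alpha_rec m
  have hmono : alpha (m+1) ≤ alpha (m+2) := alpha_mono (m+1)
  simp only [Nat.add_sub_cancel] at *
  constructor
  · exact ⟨by linarith, by linarith, h3, h4, by linarith⟩
  · refine ⟨by linarith, by linarith, ?_, h5, by linarith⟩
    push_cast at h3 ⊢
    linarith

lemma key (w : List LR) : w ≠ [] →
    ∃ A S : ℝ,
      ((w.getLast? = some LR.L ∧ A = Yv (hword w) ∧ S = Xv (hword w)) ∨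
       (w.getLast? = some LR.R ∧ A = Xv (hword w) ∧ S = Yv (hword w))) ∧
      S < A ∧ A < S + 2 ∧ S ≤ 2*(blocks w : ℝ) - 2 ∧
      alpha (blocks w - 1) ≤ S ∧ alpha (blocks w) ≤ A ∧
      var (P (hword w)) = (A + S)/2 + 1 := by
  induction w using List.reverseRecOn with
  | nil => intro h; simp at h
  | append_singleton l a ih =>
    intro _
    -- basic variance values
    have hv2 : var (P 2) = 0 := by
      have := var_even 1 le_rfl; rw [var_one] at this; simpa using this
    have hv3 : var (P 3) = 1 := by
      have := var_odd 1 le_rfl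
      norm_num [hv2, var_one] at this
      convert this using 2
    rcases eq_or_ne l [] with rfl | hl
    · -- base case: single letter
      cases a
      · refine ⟨1, 0, ?_⟩
        have ht : hword ([] ++ [LR.L]) = 5 := by simp [hword, LRstep]
        have h5 : var (P 5) = 3/2 := by
          have := var_odd 2 (by norm_num)
          rw [show 2*2+1 = 5 by norm_num] at this
          rw [this, show (2:ℕ)+1 = 3 by norm_num, hv3, hv2]
          norm_num
        refine ⟨Or.inl ⟨rfl, ?_, ?_⟩, by norm_num, by norm_num, ?_, ?_, ?_, ?_⟩
        · rw [ht]; show (1:ℝ) = var (P 3); rw [hv3]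
        · rw [ht]; show (0:ℝ) = var (P 2); rw [hv2]
        · simp [blocks]
        · simp [blocks, alpha_zero]
        · simp [blocks, alpha_one]
        · rw [ht, h5]; norm_num
      · refine ⟨1, 0, ?_⟩
        have ht : hword ([] ++ [LR.R]) = 7 := by simp [hword, LRstep]
        have hv4 : var (P 4) = 0 := by
          have := var_even 2 (by norm_num)
          rw [show 2*2 = 4 by norm_num, hv2] at this; exact this
        have h7 : var (P 7) = 3/2 := by
          have := var_odd 3 (by norm_num)
          rw [show 2*3+1 = 7 by norm_num] at this
          rw [this, show (3:ℕ)+1 = 4 by norm_num, hv4, hv3]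
          norm_num
        refine ⟨Or.inr ⟨rfl, ?_, ?_⟩, by norm_num, by norm_num, ?_, ?_, ?_, ?_⟩
        · rw [ht]; show (1:ℝ) = var (P 3); rw [hv3]
        · rw [ht]; show (0:ℝ) = var (P 4); rw [hv4]
        · simp [blocks]
        · simp [blocks, alpha_zero]
        · simp [blocks, alpha_one]
        · rw [ht, h7]; norm_num
    · -- inductive step
      obtain ⟨A, S, hlast, h1, h2, h3, h4, h5, h6⟩ := ih hl
      obtain ⟨h3t, hodd⟩ := hword_facts l
      set t := hword l with htdef
      obtain ⟨s, hs1, hts⟩ : ∃ s, 1 ≤ s ∧ t = 2*s+1 := ⟨t/2, by omega, by omega⟩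
      have hb1 : 1 ≤ blocks l := blocks_pos l hl
      have hXv : Xv t = var (P s) := by
        unfold Xv; rw [show (t-1)/2 = s by omega]
      have hYv : Yv t = var (P (s+1)) := by
        unfold Yv; rw [show (t+1)/2 = s+1 by omega]
      have hbounds := step_bounds A S (blocks l) hb1 h1 h2 h3 h4 h5
      cases a
      · -- append L : t' = 2t - 1 = 2*(2s) + 1
        have ht' : hword (l ++ [LR.L]) = 2*(2*s)+1 := by
          rw [hword_append]; simp only [LRstep]; omega
        have hvar' : var (P (hword (l ++ [LR.L])))
            = (var (P t) + var (P s))/2 + 1 := by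
          rw [ht', var_odd (2*s) (by omega), show 2*s+1 = t by omega,
            var_even s hs1]
        have hY' : Yv (hword (l ++ [LR.L])) = var (P t) := by
          unfold Yv; rw [ht', show (2*(2*s)+1+1)/2 = t by omega]
        have hX' : Xv (hword (l ++ [LR.L])) = var (P s) := by
          unfold Xv
          rw [ht', show (2*(2*s)+1-1)/2 = 2*s by omega, var_even s hs1]
        have hlast' : (l ++ [LR.L]).getLast? = some LR.L := by
          simp [List.getLast?_concat]
        rcases hlast with ⟨hL, hA, hS⟩ | ⟨hR, hA, hS⟩
        · -- same block
          have hbl : blocks (l ++ [LR.L]) = blocks l := by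
            rw [blocks_concat l hl, hL]; simp
          refine ⟨(A+S)/2+1, S, Or.inl ⟨hlast', ?_, ?_⟩, ?_, ?_, ?_, ?_, ?_, ?_⟩
          · rw [hY', h6]
          · rw [hX', ← hXv, ← hS]
          · exact hbounds.1.1
          · exact hbounds.1.2.1
          · rw [hbl]; exact hbounds.1.2.2.1
          · rw [hbl]; exact hbounds.1.2.2.2.1
          · rw [hbl]; exact hbounds.1.2.2.2.2
          · rw [hvar', h6, hS, hXv]
            try ring
        · -- new block
          have hbl : blocks (l ++ [LR.L]) = blocks l + 1 := by
            rw [blocks_concat l hl, hR]; simp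
          refine ⟨(A+S)/2+1, A, Or.inl ⟨hlast', ?_, ?_⟩, ?_, ?_, ?_, ?_, ?_, ?_⟩
          · rw [hY', h6]
          · rw [hX', ← hXv, ← hA]
          · exact hbounds.2.1
          · exact hbounds.2.2.1
          · rw [hbl]; exact hbounds.2.2.2.1
          · rw [hbl]; exact hbounds.2.2.2.2.1
          · rw [hbl]; exact hbounds.2.2.2.2.2
          · rw [hvar', h6, hA, hXv]
            try ring
      · -- append R : t' = 2t + 1 = 2*(2s+1) + 1
        have ht' : hword (l ++ [LR.R]) = 2*(2*s+1)+1 := by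
          rw [hword_append]; simp only [LRstep]; omega
        have hvar' : var (P (hword (l ++ [LR.R])))
            = (var (P (s+1)) + var (P t))/2 + 1 := by
          rw [ht', var_odd (2*s+1) (by omega), show 2*s+1+1 = 2*(s+1) by ring,
            var_even (s+1) (by omega), show 2*s+1 = t by omega]
        have hX' : Xv (hword (l ++ [LR.R])) = var (P t) := by
          unfold Xv; rw [ht', show (2*(2*s+1)+1-1)/2 = t by omega]
        have hY' : Yv (hword (l ++ [LR.R])) = var (P (s+1)) := by
          unfold Yv
          rw [ht', show (2*(2*s+1)+1+1)/2 = 2*(s+1) by omega,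
            var_even (s+1) (by omega)]
        have hlast' : (l ++ [LR.R]).getLast? = some LR.R := by
          simp [List.getLast?_concat]
        rcases hlast with ⟨hL, hA, hS⟩ | ⟨hR, hA, hS⟩
        · -- new block
          have hbl : blocks (l ++ [LR.R]) = blocks l + 1 := by
            rw [blocks_concat l hl, hL]; simp
          refine ⟨(A+S)/2+1, A, Or.inr ⟨hlast', ?_, ?_⟩, ?_, ?_, ?_, ?_, ?_, ?_⟩
          · rw [hX', h6]
          · rw [hY', ← hYv, ← hA]
          · exact hbounds.2.1
          · exact hbounds.2.2.1
          · rw [hbl]; exact hbounds.2.2.2.1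
          · rw [hbl]; exact hbounds.2.2.2.2.1
          · rw [hbl]; exact hbounds.2.2.2.2.2
          · rw [hvar', h6, hA, hYv]
            try ring
        · -- same block
          have hbl : blocks (l ++ [LR.R]) = blocks l := by
            rw [blocks_concat l hl, hR]; simp
          refine ⟨(A+S)/2+1, S, Or.inr ⟨hlast', ?_, ?_⟩, ?_, ?_, ?_, ?_, ?_, ?_⟩
          · rw [hX', h6]
          · rw [hY', ← hYv, ← hS]
          · exact hbounds.1.1
          · exact hbounds.1.2.1
          · rw [hbl]; exact hbounds.1.2.2.1
          · rw [hbl]; exact hbounds.1.2.2.2.1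
          · rw [hbl]; exact hbounds.1.2.2.2.2
          · rw [hvar', h6, hS, hYv]
            try ring


/-- For a nonempty word `w` with `b = ℓ_b(w)` blocks,
`2b/3 + 8/9 + (-1)^b / (9 · 2^b) ≤ D²[P_w] < 2b`. -/
theorem variance_blocks_bounds (w : List LR) (hne : w ≠ []) :
    2 * (blocks w : ℝ) / 3 + 8 / 9 + (-1 : ℝ) ^ (blocks w) / (9 * 2 ^ (blocks w))
      ≤ var (P (hword w)) ∧
    var (P (hword w)) < 2 * (blocks w : ℝ) := by
  obtain ⟨A, S, _, h1, h2, h3, h4, h5, h6⟩ := key w hne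
  have hb1 : 1 ≤ blocks w := blocks_pos w hne
  obtain ⟨m, hm⟩ : ∃ m, blocks w = m + 1 := ⟨blocks w - 1, by omega⟩
  constructor
  · have halpha : 2 * (blocks w : ℝ) / 3 + 8 / 9
        + (-1 : ℝ) ^ (blocks w) / (9 * 2 ^ (blocks w)) = alpha (blocks w + 1) :=
      (alpha_succ_eq (blocks w)).symm
    have hrec : alpha (blocks w + 1) = (alpha (blocks w) + alpha (blocks w - 1))/2 + 1 := by
      rw [hm, Nat.add_sub_cancel]
      exact alpha_rec m
    rw [halpha, hrec, h6]
    linarith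
  · rw [h6]
    linarith
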